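/- Let Σ_1, Σ_2 be positive definite with eigenvalues in [C_e^{-1}, C_e], δ = μ_2 - μ_1, and ∇ = Σ_2^{-1} - Σ_1^{-1}. Then the symmetrized KL divergence between N(μ_1,Σ_1) and N(μ_2,Σ_2), namely KL(f_1‖f_2) + KL(f_2‖f_1) = (1/2){tr((Σ_2^{-1}+Σ_1^{-1})δδ^T) + tr((Σ_1 - Σ_2)(Σ_2^{-1} - Σ_1^{-1}))}, is bounded below by c(‖δ‖² + ‖∇‖_F²) for a constant c > 0 depending only on C_e. -/

import Mathlib

set_option maxHeartbeats 1000000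


open Matrix BigOperators

section Aux

variable {n : Type*} [Fintype n] [DecidableEq n]

/-- Trace of a real PSD matrix is nonnegative. -/
lemma psd_trace_nonneg {M : Matrix n n ℝ} (hM : M.PosSemidef) : 0 ≤ M.trace := by
  have : ∀ i, 0 ≤ M i i := by
    intro i
    have := hM.diag_nonneg (i := i)
    simpa [Matrix.mulVec, dotProduct, Pi.single_apply] using this
  exact Finset.sum_nonneg fun i _ => this i

/-- Trace of product of two real PSD matrices is nonnegative. -/
lemma psd_trace_mul_nonneg {A B : Matrix n n ℝ} (hA : A.PosSemidef) (hB : B.PosSemidef) :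
    0 ≤ (A * B).trace := by
  obtain ⟨C, rfl⟩ : ∃ C : Matrix n n ℝ, A = Cᴴ * C := by
    open scoped MatrixOrder Matrix.Norms.L2Operator in
    obtain ⟨C, hC⟩ := CStarAlgebra.nonneg_iff_eq_star_mul_self.mp (Matrix.nonneg_iff_posSemidef.mpr hA)
    exact ⟨C, hC⟩
  have h1 : (Cᴴ * C * B).trace = (C * B * Cᴴ).trace := by
    rw [Matrix.mul_assoc, Matrix.trace_mul_comm, Matrix.mul_assoc]
  rw [h1]
  exact psd_trace_nonneg (hB.mul_mul_conjTranspose_same C)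

/-- If M is hermitian with quadratic form bounded below by c‖x‖² and B is PSD,
then c * tr B ≤ tr (M * B). -/
lemma trace_mul_lower {M B : Matrix n n ℝ} (c : ℝ) (hM : M.IsHermitian)
    (hq : ∀ v : n → ℝ, c * (∑ i, v i ^ 2) ≤ v ⬝ᵥ (M *ᵥ v))
    (hB : B.PosSemidef) : c * B.trace ≤ (M * B).trace := by
  have hMc : (M - c • (1 : Matrix n n ℝ)).PosSemidef := by
    refine Matrix.PosSemidef.of_dotProduct_mulVec_nonneg (hM.sub (by
      simp [Matrix.IsHermitian, Matrix.conjTranspose_smul])) fun x => ?_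
    have := hq x
    have hdot : (x : n → ℝ) ⬝ᵥ x = ∑ i, x i ^ 2 := by
      simp [dotProduct, pow_two]
    simp only [star_trivial, Matrix.sub_mulVec, Matrix.smul_mulVec, Matrix.one_mulVec,
      dotProduct_sub, dotProduct_smul, smul_eq_mul]
    rw [hdot]
    linarith
  have h0 : 0 ≤ ((M - c • (1 : Matrix n n ℝ)) * B).trace := psd_trace_mul_nonneg hMc hB
  have hexp : ((M - c • (1 : Matrix n n ℝ)) * B).trace = (M * B).trace - c * B.trace := by
    rw [Matrix.sub_mul, Matrix.trace_sub, Matrix.smul_mul, Matrix.trace_smul, Matrix.one_mul,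
      smul_eq_mul]
  linarith [hexp ▸ h0]

/-- Quadratic lower bound for the inverse matrix. -/
lemma inv_quad_lower {Ce : ℝ} (hCe : 1 ≤ Ce) {S : Matrix n n ℝ} (hS : S.PosDef)
    (hq : ∀ v : n → ℝ, Ce⁻¹ * (∑ i, v i ^ 2) ≤ v ⬝ᵥ (S *ᵥ v) ∧
      v ⬝ᵥ (S *ᵥ v) ≤ Ce * (∑ i, v i ^ 2)) (v : n → ℝ) :
    Ce⁻¹ * (∑ i, v i ^ 2) ≤ v ⬝ᵥ (S⁻¹ *ᵥ v) := by
  have hCe0 : (0:ℝ) < Ce := lt_of_lt_of_le one_pos hCe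
  set x : n → ℝ := S⁻¹ *ᵥ v with hx
  have hSx : S *ᵥ x = v := by
    rw [hx, Matrix.mulVec_mulVec, Matrix.mul_nonsing_inv _ (isUnit_iff_ne_zero.mpr hS.det_pos.ne'),
      Matrix.one_mulVec]
  -- v ⬝ S⁻¹ v = x ⬝ S x
  have hQ : v ⬝ᵥ (S⁻¹ *ᵥ v) = x ⬝ᵥ (S *ᵥ x) := by
    rw [← hx, dotProduct_comm, ← hSx]
  -- cross terms
  have hvx : v ⬝ᵥ (S *ᵥ x) = ∑ i, v i ^ 2 := by
    rw [hSx]; simp [dotProduct, pow_two]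
  have hxv : x ⬝ᵥ (S *ᵥ v) = ∑ i, v i ^ 2 := by
    have hsymm : Sᵀ = S := by
      ext i j
      have := congrFun (congrFun hS.isHermitian.eq i) j
      simpa [Matrix.conjTranspose_apply] using this
    have hsym : x ᵥ* S = S *ᵥ x := by
      rw [← Matrix.mulVec_transpose, hsymm]
    rw [dotProduct_mulVec, hsym, hSx]
    simp [dotProduct, pow_two]
  -- expand 0 ≤ (x - Ce⁻¹ • v) ⬝ S (x - Ce⁻¹ • v)
  have h0 : 0 ≤ (x - Ce⁻¹ • v) ⬝ᵥ (S *ᵥ (x - Ce⁻¹ • v)) := by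
    refine le_trans ?_ ((hq (x - Ce⁻¹ • v)).1)
    positivity
  have hexp : (x - Ce⁻¹ • v) ⬝ᵥ (S *ᵥ (x - Ce⁻¹ • v)) =
      x ⬝ᵥ (S *ᵥ x) - Ce⁻¹ * (x ⬝ᵥ (S *ᵥ v)) - Ce⁻¹ * (v ⬝ᵥ (S *ᵥ x))
        + Ce⁻¹ * Ce⁻¹ * (v ⬝ᵥ (S *ᵥ v)) := by
    simp only [Matrix.mulVec_sub, Matrix.mulVec_smul, sub_dotProduct, dotProduct_sub,
      smul_dotProduct, dotProduct_smul, smul_eq_mul]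
    ring
  have hupper := (hq v).2
  have hinv : Ce⁻¹ * Ce = 1 := inv_mul_cancel₀ hCe0.ne'
  have hs2 : (0:ℝ) ≤ ∑ i, v i ^ 2 := by positivity
  rw [hQ]
  have h5 : Ce⁻¹ * Ce⁻¹ * (v ⬝ᵥ (S *ᵥ v)) ≤ Ce⁻¹ * (∑ i, v i ^ 2) := by
    have h6 := mul_le_mul_of_nonneg_left hupper
      (by positivity : (0:ℝ) ≤ Ce⁻¹ * Ce⁻¹)
    have h7 : Ce⁻¹ * Ce⁻¹ * (Ce * (∑ i, v i ^ 2)) = Ce⁻¹ * (∑ i, v i ^ 2) := by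
      field_simp
    linarith
  have h8 : Ce⁻¹ * (x ⬝ᵥ (S *ᵥ v)) = Ce⁻¹ * (∑ i, v i ^ 2) := by rw [hxv]
  have h9 : Ce⁻¹ * (v ⬝ᵥ (S *ᵥ x)) = Ce⁻¹ * (∑ i, v i ^ 2) := by rw [hvx]
  linarith [hexp ▸ h0, h5, h8, h9]

end Aux

/-- The symmetrized Gaussian KL divergence is bounded below by
c(‖δ‖² + ‖∇‖_F²) with c > 0 depending only on Cₑ. -/
theorem stmt13 (Ce : ℝ) (hCe : 1 ≤ Ce) :
    ∃ c : ℝ, 0 < c ∧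
      ∀ (p : ℕ) (μ1 μ2 : Fin p → ℝ) (S1 S2 : Matrix (Fin p) (Fin p) ℝ),
        S1.PosDef → S2.PosDef →
        (∀ v : Fin p → ℝ, Ce⁻¹ * (∑ i, v i ^ 2) ≤ v ⬝ᵥ (S1 *ᵥ v) ∧
          v ⬝ᵥ (S1 *ᵥ v) ≤ Ce * (∑ i, v i ^ 2)) →
        (∀ v : Fin p → ℝ, Ce⁻¹ * (∑ i, v i ^ 2) ≤ v ⬝ᵥ (S2 *ᵥ v) ∧
          v ⬝ᵥ (S2 *ᵥ v) ≤ Ce * (∑ i, v i ^ 2)) →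
        c * ((∑ i, (μ2 i - μ1 i) ^ 2) + ∑ i, ∑ j, ((S2⁻¹ - S1⁻¹) i j) ^ 2) ≤
          (1 / 2) * (((S2⁻¹ + S1⁻¹) *
              Matrix.of (fun i j => (μ2 i - μ1 i) * (μ2 j - μ1 j))).trace
            + ((S1 - S2) * (S2⁻¹ - S1⁻¹)).trace) := by
  have hCe0 : (0:ℝ) < Ce := lt_of_lt_of_le one_pos hCe
  refine ⟨1 / (2 * Ce ^ 2), by positivity, ?_⟩
  intro p μ1 μ2 S1 S2 h1 h2 q1 q2
  set δ : Fin p → ℝ := fun i => μ2 i - μ1 i with hδ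
  set G : Matrix (Fin p) (Fin p) ℝ := S2⁻¹ - S1⁻¹ with hG
  -- Term 1
  have hT1eq : ((S2⁻¹ + S1⁻¹) * Matrix.of (fun i j => δ i * δ j)).trace
      = δ ⬝ᵥ (S2⁻¹ *ᵥ δ) + δ ⬝ᵥ (S1⁻¹ *ᵥ δ) := by
    simp only [Matrix.trace, Matrix.diag, Matrix.mul_apply, Matrix.of_apply,
      Matrix.add_apply, Matrix.mulVec, dotProduct, Finset.mul_sum, ← Finset.sum_add_distrib]
    refine Finset.sum_congr rfl fun i _ => Finset.sum_congr rfl fun j _ => by ring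
  have hT1a := inv_quad_lower hCe h2 q2 δ
  have hT1b := inv_quad_lower hCe h1 q1 δ
  -- Term 2
  have hu1 : IsUnit S1.det := isUnit_iff_ne_zero.mpr h1.det_pos.ne'
  have hu2 : IsUnit S2.det := isUnit_iff_ne_zero.mpr h2.det_pos.ne'
  have hfact : S1 - S2 = S1 * G * S2 := by
    rw [hG, Matrix.mul_sub, Matrix.mul_nonsing_inv _ hu1, Matrix.sub_mul,
      Matrix.mul_assoc, Matrix.nonsing_inv_mul _ hu2, Matrix.mul_one, Matrix.one_mul]
  have hGherm : G.IsHermitian := (h2.inv.isHermitian).sub (h1.inv.isHermitian)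
  have hB1 : (G * S2 * G).PosSemidef := by
    have := (h2.posSemidef).conjTranspose_mul_mul_same G
    rwa [hGherm.eq] at this
  have hB2 : (G * G).PosSemidef := by
    have := Matrix.posSemidef_conjTranspose_mul_self G
    rwa [hGherm.eq] at this
  have hstep1 : Ce⁻¹ * (G * S2 * G).trace ≤ ((S1 - S2) * G).trace := by
    have hB1' : (G * (S2 * G)).PosSemidef := by rw [← Matrix.mul_assoc]; exact hB1
    have h := trace_mul_lower Ce⁻¹ h1.isHermitian (fun v => (q1 v).1) hB1'
    simp only [← Matrix.mul_assoc] at h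
    rw [hfact]
    exact h
  have hstep2 : Ce⁻¹ * (G * G).trace ≤ (G * S2 * G).trace := by
    have hcyc : (G * S2 * G).trace = (S2 * (G * G)).trace := by
      rw [Matrix.trace_mul_comm (G * S2) G, ← Matrix.mul_assoc, Matrix.trace_mul_comm]
    rw [hcyc]
    exact trace_mul_lower Ce⁻¹ h2.isHermitian (fun v => (q2 v).1) hB2
  have hGG : (G * G).trace = ∑ i, ∑ j, (G i j) ^ 2 := by
    have hsym : ∀ i j, G j i = G i j := by
      intro i j
      have := congrFun (congrFun hGherm.eq i) j
      simpa [Matrix.conjTranspose_apply] using this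
    simp only [Matrix.trace, Matrix.diag, Matrix.mul_apply]
    refine Finset.sum_congr rfl fun i _ => Finset.sum_congr rfl fun j _ => by
      rw [hsym i j]; ring
  -- combine
  have hdot : ∀ (a : Fin p → ℝ), a ⬝ᵥ a = ∑ i, a i ^ 2 := fun a => by
    simp [dotProduct, pow_two]
  set A := ∑ i, δ i ^ 2 with hA
  set B := ∑ i, ∑ j, (G i j) ^ 2 with hB
  have hA0 : 0 ≤ A := by positivity
  have hB0 : 0 ≤ B := by positivity
  have hT1 : 2 * Ce⁻¹ * A ≤ ((S2⁻¹ + S1⁻¹) * Matrix.of (fun i j => δ i * δ j)).trace := by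
    rw [hT1eq]; linarith
  have hT2 : Ce⁻¹ * (Ce⁻¹ * B) ≤ ((S1 - S2) * G).trace := by
    calc Ce⁻¹ * (Ce⁻¹ * B) = Ce⁻¹ * (Ce⁻¹ * (G * G).trace) := by rw [hGG]
    _ ≤ Ce⁻¹ * (G * S2 * G).trace := by
        have := hstep2
        have h0 : (0:ℝ) ≤ Ce⁻¹ := (inv_pos.mpr hCe0).le
        nlinarith
    _ ≤ ((S1 - S2) * G).trace := hstep1
  have hinv : Ce⁻¹ * Ce = 1 := inv_mul_cancel₀ hCe0.ne'
  have hgoal : 1 / (2 * Ce ^ 2) * (A + B) ≤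
      (1/2) * (((S2⁻¹ + S1⁻¹) * Matrix.of (fun i j => δ i * δ j)).trace
        + ((S1 - S2) * G).trace) := by
    have hc1 : 1 / (2 * Ce ^ 2) * A ≤ Ce⁻¹ * A := by
      rw [div_mul_eq_mul_div, one_mul, div_le_iff₀ (by positivity)]
      have : Ce⁻¹ * (2 * Ce ^ 2) = 2 * Ce := by
        field_simp
      rw [mul_comm (Ce⁻¹ * A), ← mul_assoc, mul_comm _ Ce⁻¹, this]
      nlinarith
    have hc2 : 1 / (2 * Ce ^ 2) * B ≤ (1/2) * (Ce⁻¹ * (Ce⁻¹ * B)) := by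
      rw [div_mul_eq_mul_div, one_mul, div_le_iff₀ (by positivity)]
      have : Ce⁻¹ * Ce⁻¹ * (2 * Ce ^ 2) = 2 := by
        field_simp
      nlinarith [this]
    nlinarith [hT1, hT2, hc1, hc2]
  calc 1 / (2 * Ce ^ 2) * ((∑ i, (μ2 i - μ1 i) ^ 2) + ∑ i, ∑ j, ((S2⁻¹ - S1⁻¹) i j) ^ 2)
      = 1 / (2 * Ce ^ 2) * (A + B) := by rw [hA, hB, hδ, hG]
    _ ≤ _ := hgoal
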